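/- arXiv:1011.1942 — 2 statements merged into one kernel-verified Lean document; each statement's English description precedes it below -/
import Mathlib

section
/- For each h ∈ ℤ/dℤ and each character index σ ∈ ℤ/dℤ, consider on ℂ^d the operator H^{h,σ} = -(|0⟩⟨0| + |h⟩⟨h| + |I⟩⟨I| + |σ⟩⟨σ|), where |σ⟩ = (1/√d)Σ_j ω^{σj}|j⟩ is a Fourier basis state and |I⟩ = |σ=0⟩. Then ‖H^{h,σ}‖ ≤ 2(1 + 1/√d), with equality if and only if (h,σ) = (0,0); in the case (h,σ)=(0,0) the minimum eigenvalue is -2(1+1/√d) with eigenvector |0⟩+|I⟩. -/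
/-- Rank-one operator `|u⟩⟨u| : x ↦ ⟨u,x⟩ u`. -/
noncomputable def rankOneProj {H : Type*} [NormedAddCommGroup H]
    [InnerProductSpace ℂ H] (u : H) : H →L[ℂ] H :=
  (innerSL ℂ u).smulRight u

/-- Computational basis state `|h⟩` of `ℂ^d`. -/
noncomputable def basisVec (d : ℕ) [NeZero d] (h : ZMod d) :
    EuclideanSpace ℂ (ZMod d) :=
  EuclideanSpace.single h 1

/-- Fourier basis state `|σ⟩ = (1/√d) Σ_j ω^(σ j) |j⟩` with `ω = exp(2πi/d)`. -/
noncomputable def fourierV (d : ℕ) [NeZero d] (σ : ZMod d) :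
    EuclideanSpace ℂ (ZMod d) :=
  WithLp.toLp 2 (fun j : ZMod d => (1 / Real.sqrt d : ℂ)
    * Complex.exp (2 * Real.pi * Complex.I / d) ^ (σ.val * j.val))

/-- The block Hamiltonian `H^{h,σ} = -(|0⟩⟨0| + |h⟩⟨h| + |I⟩⟨I| + |σ⟩⟨σ|)`. -/
noncomputable def blockHam (d : ℕ) [NeZero d] (h σ : ZMod d) :
    EuclideanSpace ℂ (ZMod d) →L[ℂ] EuclideanSpace ℂ (ZMod d) :=
  -(rankOneProj (basisVec d 0) + rankOneProj (basisVec d h)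
    + rankOneProj (fourierV d 0) + rankOneProj (fourierV d σ))

local notation "⟪" x ", " y "⟫" => @inner ℂ _ _ x y

/-! ### Generic inner-product-space lemmas -/

lemma complex_eq_norm_of_re {z : ℂ} (h : z.re = ‖z‖) : z = (‖z‖ : ℂ) := by
  have h2 : ‖z‖ ^ 2 = z.re ^ 2 + z.im ^ 2 := by
    rw [Complex.sq_norm, Complex.normSq_apply]; ring
  have him : z.im = 0 := by
    have h3 : z.im ^ 2 = 0 := by nlinarith [norm_nonneg z]
    exact pow_eq_zero_iff (n := 2) (by norm_num) |>.1 h3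
  exact Complex.ext (by simp [← h]) (by simp [him])

lemma conj_mul_self (a : ℂ) : (starRingEnd ℂ) a * a = ((‖a‖ ^ 2 : ℝ) : ℂ) := by
  rw [mul_comm, Complex.mul_conj, Complex.normSq_eq_norm_sq]

section PairLemmas
variable {E : Type*} [NormedAddCommGroup E] [InnerProductSpace ℂ E]

lemma pair_w_sq (u v x : E) (hu : ‖u‖ = 1) (hv : ‖v‖ = 1) :
    ‖⟪u, x⟫ • u + ⟪v, x⟫ • v‖ ^ 2
      = ‖⟪u, x⟫‖ ^ 2 + ‖⟪v, x⟫‖ ^ 2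
        + 2 * ((starRingEnd ℂ) ⟪u, x⟫ * ⟪v, x⟫ * ⟪u, v⟫).re := by
  rw [norm_add_sq (𝕜 := ℂ), inner_smul_left, inner_smul_right, norm_smul, norm_smul,
    hu, hv]
  simp [mul_pow, mul_assoc]
  ring

lemma pair_inner_w (u v x : E) :
    ⟪⟪u, x⟫ • u + ⟪v, x⟫ • v, x⟫
      = ((‖⟪u, x⟫‖ ^ 2 + ‖⟪v, x⟫‖ ^ 2 : ℝ) : ℂ) := by
  rw [inner_add_left, inner_smul_left, inner_smul_left, conj_mul_self, conj_mul_self]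
  push_cast; ring

lemma pair_S_le (u v x : E) :
    ‖⟪u, x⟫‖ ^ 2 + ‖⟪v, x⟫‖ ^ 2 ≤ ‖⟪u, x⟫ • u + ⟪v, x⟫ • v‖ * ‖x‖ := by
  have h0 : ‖⟪u, x⟫‖ ^ 2 + ‖⟪v, x⟫‖ ^ 2 = (⟪⟪u, x⟫ • u + ⟪v, x⟫ • v, x⟫).re := by
    rw [pair_inner_w]; simp [← Complex.ofReal_pow]
  calc ‖⟪u, x⟫‖ ^ 2 + ‖⟪v, x⟫‖ ^ 2
      ≤ ‖⟪⟪u, x⟫ • u + ⟪v, x⟫ • v, x⟫‖ := h0 ▸ Complex.re_le_norm _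
    _ ≤ ‖⟪u, x⟫ • u + ⟪v, x⟫ • v‖ * ‖x‖ := by
        exact norm_inner_le_norm _ _

lemma pair_re_le (u v x : E) {t : ℝ} (hc : ‖⟪u, v⟫‖ ≤ t) :
    ((starRingEnd ℂ) ⟪u, x⟫ * ⟪v, x⟫ * ⟪u, v⟫).re ≤ ‖⟪u, x⟫‖ * ‖⟪v, x⟫‖ * t := by
  have h1 := Complex.re_le_norm ((starRingEnd ℂ) ⟪u, x⟫ * ⟪v, x⟫ * ⟪u, v⟫)
  refine h1.trans ?_
  rw [norm_mul, norm_mul, RCLike.norm_conj]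
  exact mul_le_mul_of_nonneg_left hc (by positivity)

lemma pair_apply_le (u v x : E) {t : ℝ} (hu : ‖u‖ = 1) (hv : ‖v‖ = 1)
    (hc : ‖⟪u, v⟫‖ ≤ t) :
    ‖⟪u, x⟫ • u + ⟪v, x⟫ • v‖ ≤ (1 + t) * ‖x‖ := by
  set a := ⟪u, x⟫
  set b := ⟪v, x⟫
  set w := a • u + b • v with hwdef
  have ht0 : 0 ≤ t := le_trans (norm_nonneg _) hc
  have h1 := pair_w_sq u v x hu hv
  have h2 := pair_S_le u v x
  have h3 := pair_re_le u v x hc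
  have hsq : 2 * (‖a‖ * ‖b‖) ≤ ‖a‖ ^ 2 + ‖b‖ ^ 2 := by nlinarith [sq_nonneg (‖a‖ - ‖b‖)]
  rcases eq_or_lt_of_le (norm_nonneg w) with h0 | h0
  · rw [← h0]; positivity
  · have : ‖w‖ ^ 2 ≤ ‖w‖ * ‖x‖ * (1 + t) := by nlinarith
    nlinarith

lemma norm_rankOne_add_le (u v : E) {t : ℝ} (hu : ‖u‖ = 1) (hv : ‖v‖ = 1)
    (hc : ‖⟪u, v⟫‖ ≤ t) :
    ‖rankOneProj u + rankOneProj v‖ ≤ 1 + t := by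
  have ht0 : 0 ≤ t := le_trans (norm_nonneg _) hc
  refine ContinuousLinearMap.opNorm_le_bound _ (by linarith) (fun x => ?_)
  exact pair_apply_le u v x hu hv hc

lemma rigidity {u v x : E} {t : ℝ} (hu : ‖u‖ = 1) (hv : ‖v‖ = 1) (hx : ‖x‖ = 1)
    (ht : 0 < t) (hc : ‖⟪u, v⟫‖ = t)
    (hw : ‖⟪u, x⟫ • u + ⟪v, x⟫ • v‖ = 1 + t) :
    ∃ ν : ℂ, ν ≠ 0 ∧ x = ν • (u + ((t : ℂ) / ⟪u, v⟫) • v) := by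
  set a := ⟪u, x⟫ with ha
  set b := ⟪v, x⟫ with hb
  set c := ⟪u, v⟫ with hcdef
  set w := a • u + b • v with hwdef
  set z := (starRingEnd ℂ) a * b * c with hz
  have h1 : ‖w‖ ^ 2 = ‖a‖ ^ 2 + ‖b‖ ^ 2 + 2 * z.re := pair_w_sq u v x hu hv
  have h2 : ‖a‖ ^ 2 + ‖b‖ ^ 2 ≤ ‖w‖ * ‖x‖ := pair_S_le u v x
  have h3 : z.re ≤ ‖a‖ * ‖b‖ * t := pair_re_le u v x hc.le
  have hsq : 2 * (‖a‖ * ‖b‖) ≤ ‖a‖ ^ 2 + ‖b‖ ^ 2 := by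
    nlinarith [sq_nonneg (‖a‖ - ‖b‖)]
  rw [hx, mul_one] at h2
  rw [hw] at h1 h2
  have hS : ‖a‖ ^ 2 + ‖b‖ ^ 2 = 1 + t := by nlinarith
  have hab : ‖a‖ = ‖b‖ := by
    have h5 : (‖a‖ - ‖b‖) ^ 2 = 0 := by nlinarith [sq_nonneg (‖a‖ - ‖b‖)]
    have := pow_eq_zero_iff (n := 2) (by norm_num) |>.1 h5
    linarith [sub_eq_zero.1 this]
  have hzre : z.re = ‖a‖ * ‖b‖ * t := by nlinarith
  have hznorm : ‖z‖ = ‖a‖ * ‖b‖ * t := by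
    rw [hz, norm_mul, norm_mul, RCLike.norm_conj, hc]
  have hzeq : z = ((‖a‖ * ‖b‖ * t : ℝ) : ℂ) := by
    have := complex_eq_norm_of_re (z := z) (by rw [hzre, hznorm])
    rwa [hznorm] at this
  have ha0 : a ≠ 0 := by
    intro h0
    rw [h0, norm_zero] at hab hS
    rw [← hab] at hS
    nlinarith
  have hc0 : c ≠ 0 := by
    intro h0; rw [h0, norm_zero] at hc; linarith
  have hbeq : b = a * (t : ℂ) / c := by
    have key : (starRingEnd ℂ) a * (b * c) = (starRingEnd ℂ) a * (a * (t : ℂ)) := by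
      have h4 : (starRingEnd ℂ) a * a = ((‖a‖ ^ 2 : ℝ) : ℂ) := conj_mul_self a
      calc (starRingEnd ℂ) a * (b * c) = z := by rw [hz]; ring
        _ = ((‖a‖ * ‖b‖ * t : ℝ) : ℂ) := hzeq
        _ = ((‖a‖ ^ 2 : ℝ) : ℂ) * (t : ℂ) := by rw [← hab]; push_cast; ring
        _ = (starRingEnd ℂ) a * (a * (t : ℂ)) := by rw [← h4]; ring
    have hca : (starRingEnd ℂ) a ≠ 0 := by simpa using ha0
    have h6 := mul_left_cancel₀ hca key
    rw [eq_div_iff hc0]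
    exact h6
  have hw0 : w ≠ 0 := by
    intro h0; rw [h0, norm_zero] at hw; linarith
  have hx0 : x ≠ 0 := by
    intro h0; rw [h0, norm_zero] at hx; linarith
  have hCS : ‖⟪w, x⟫‖ = ‖w‖ * ‖x‖ := by
    have hinner : ⟪w, x⟫ = ((‖a‖ ^ 2 + ‖b‖ ^ 2 : ℝ) : ℂ) := pair_inner_w u v x
    rw [hinner, hw, hx, mul_one, hS]
    rw [Complex.norm_real, Real.norm_eq_abs, abs_of_pos (by linarith)]
  obtain ⟨r, hr0, hxr⟩ := (norm_inner_eq_norm_iff hw0 hx0).1 hCS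
  refine ⟨r * a, mul_ne_zero hr0 ha0, ?_⟩
  rw [hxr, hwdef, smul_add, smul_add, smul_smul, smul_smul, smul_smul]
  congr 1
  rw [hbeq]
  ring

end PairLemmas

/-! ### Norm attainment -/

lemma exists_norm_attained {E : Type*} [NormedAddCommGroup E] [InnerProductSpace ℂ E]
    [FiniteDimensional ℂ E] [Nontrivial E] (T : E →L[ℂ] E) :
    ∃ x : E, ‖x‖ = 1 ∧ ‖T x‖ = ‖T‖ := by
  obtain ⟨x0, hx0⟩ : ∃ x : E, ‖x‖ = 1 := by
    obtain ⟨y, hy⟩ := exists_ne (0 : E)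
    exact ⟨‖y‖⁻¹ • y, by
      rw [norm_smul, norm_inv, norm_norm, inv_mul_cancel₀ (norm_ne_zero_iff.2 hy)]⟩
  have hx0s : x0 ∈ Metric.sphere (0 : E) 1 := by simp [hx0]
  have hcont : Continuous fun y : E => ‖T y‖ := (T.continuous.norm)
  obtain ⟨x, hxs, hmax⟩ := (isCompact_sphere (0 : E) 1).exists_isMaxOn ⟨x0, hx0s⟩
    hcont.continuousOn
  have hx1 : ‖x‖ = 1 := by simpa using hxs
  refine ⟨x, hx1, le_antisymm ?_ ?_⟩
  · calc ‖T x‖ ≤ ‖T‖ * ‖x‖ := T.le_opNorm x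
      _ = ‖T‖ := by rw [hx1, mul_one]
  · refine T.opNorm_le_bound (norm_nonneg _) (fun y => ?_)
    rcases eq_or_ne y 0 with rfl | hy
    · simp
    · have hyn : ‖y‖ ≠ 0 := norm_ne_zero_iff.2 hy
      have hmem : ‖y‖⁻¹ • y ∈ Metric.sphere (0 : E) 1 := by
        simp [norm_smul, inv_mul_cancel₀ hyn]
      have h2 : ‖T (‖y‖⁻¹ • y)‖ ≤ ‖T x‖ := hmax hmem
      rw [ContinuousLinearMap.map_smul_of_tower, norm_smul, norm_inv, norm_norm] at h2
      have h3 := mul_le_mul_of_nonneg_left h2 (norm_nonneg y)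
      rw [← mul_assoc, mul_inv_cancel₀ hyn, one_mul] at h3
      linarith [h3]

/-! ### Concrete computations -/

lemma rankOneProj_apply {H : Type*} [NormedAddCommGroup H]
    [InnerProductSpace ℂ H] (u x : H) : rankOneProj u x = ⟪u, x⟫ • u := rfl

lemma fourierV_apply (d : ℕ) [NeZero d] (σ j : ZMod d) :
    fourierV d σ j = (1 / Real.sqrt d : ℂ)
      * Complex.exp (2 * Real.pi * Complex.I / d) ^ (σ.val * j.val) := rfl

lemma sqrt_d_pos (d : ℕ) [NeZero d] : 0 < Real.sqrt d :=
  Real.sqrt_pos.2 (by exact_mod_cast Nat.pos_of_ne_zero (NeZero.ne d))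

lemma norm_omega_pow (d : ℕ) [NeZero d] (k : ℕ) :
    ‖Complex.exp (2 * Real.pi * Complex.I / d) ^ k‖ = 1 := by
  rw [norm_pow, Complex.norm_exp]
  have : (2 * Real.pi * Complex.I / d).re = 0 := by
    simp [Complex.div_re]
  rw [this, Real.exp_zero, one_pow]

lemma omega_pow_ne_zero (d : ℕ) [NeZero d] (k : ℕ) :
    Complex.exp (2 * Real.pi * Complex.I / d) ^ k ≠ 0 := by
  intro h
  have := norm_omega_pow d k
  rw [h, norm_zero] at this
  norm_num at this

lemma norm_fourierV_entry (d : ℕ) [NeZero d] (σ j : ZMod d) :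
    ‖fourierV d σ j‖ = 1 / Real.sqrt d := by
  rw [fourierV_apply, norm_mul, norm_omega_pow, mul_one]
  simp [abs_of_pos (sqrt_d_pos d)]

lemma norm_basisVec (d : ℕ) [NeZero d] (h : ZMod d) : ‖basisVec d h‖ = 1 := by
  simp [basisVec]

lemma norm_fourierV (d : ℕ) [NeZero d] (σ : ZMod d) : ‖fourierV d σ‖ = 1 := by
  have hd : (0:ℝ) < d := by exact_mod_cast Nat.pos_of_ne_zero (NeZero.ne d)
  rw [EuclideanSpace.norm_eq]
  have : ∀ j : ZMod d, ‖fourierV d σ j‖ ^ 2 = 1 / d := by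
    intro j
    rw [norm_fourierV_entry, div_pow, one_pow, Real.sq_sqrt hd.le]
  rw [Finset.sum_congr rfl (fun j _ => this j)]
  simp only [Finset.sum_const, Finset.card_univ]
  rw [ZMod.card d]
  rw [nsmul_eq_mul, mul_one_div_cancel hd.ne', Real.sqrt_one]

lemma inner_basis_fourier (d : ℕ) [NeZero d] (h σ : ZMod d) :
    ⟪basisVec d h, fourierV d σ⟫ = fourierV d σ h := by
  rw [basisVec, EuclideanSpace.inner_single_left]
  simp

lemma norm_inner_basis_fourier (d : ℕ) [NeZero d] (h σ : ZMod d) :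
    ‖⟪basisVec d h, fourierV d σ⟫‖ = 1 / Real.sqrt d := by
  rw [inner_basis_fourier, norm_fourierV_entry]

lemma fourierV_zero_apply (d : ℕ) [NeZero d] (j : ZMod d) :
    fourierV d 0 j = (1 / Real.sqrt d : ℂ) := by
  rw [fourierV_apply]
  simp [ZMod.val_zero]

lemma basisVec_apply (d : ℕ) [NeZero d] (h j : ZMod d) :
    basisVec d h j = if j = h then 1 else 0 := by
  rw [basisVec, EuclideanSpace.single_apply]

/-! ### The four statements -/

lemma blockHam_regroup (d : ℕ) [NeZero d] (h σ : ZMod d) :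
    blockHam d h σ = -((rankOneProj (basisVec d 0) + rankOneProj (fourierV d 0))
      + (rankOneProj (basisVec d h) + rankOneProj (fourierV d σ))) := by
  rw [blockHam]; abel_nf

lemma blockHam_le (d : ℕ) [NeZero d] (h σ : ZMod d) :
    ‖blockHam d h σ‖ ≤ 2 * (1 + 1 / Real.sqrt d) := by
  rw [blockHam_regroup, norm_neg]
  have h1 := norm_rankOne_add_le (basisVec d 0) (fourierV d 0)
    (norm_basisVec d 0) (norm_fourierV d 0) (le_of_eq (norm_inner_basis_fourier d 0 0))
  have h2 := norm_rankOne_add_le (basisVec d h) (fourierV d σ)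
    (norm_basisVec d h) (norm_fourierV d σ) (le_of_eq (norm_inner_basis_fourier d h σ))
  calc ‖_ + _‖ ≤ _ := norm_add_le _ _
    _ ≤ (1 + 1 / Real.sqrt d) + (1 + 1 / Real.sqrt d) := add_le_add h1 h2
    _ = 2 * (1 + 1 / Real.sqrt d) := by ring

lemma blockHam_eigen (d : ℕ) [NeZero d] :
    blockHam d 0 0 (basisVec d 0 + fourierV d 0)
      = ((-(2 * (1 + 1 / Real.sqrt d)) : ℝ) : ℂ) • (basisVec d 0 + fourierV d 0) := by
  set u := basisVec d 0 with hu
  set f := fourierV d 0 with hf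
  have hiuu : ⟪u, u⟫ = 1 := by
    rw [inner_self_eq_norm_sq_to_K, hu, norm_basisVec]; norm_num
  have hiuf : ⟪u, f⟫ = (1 / Real.sqrt d : ℂ) := by
    rw [hu, hf, inner_basis_fourier, fourierV_zero_apply]
  have hifu : ⟪f, u⟫ = (1 / Real.sqrt d : ℂ) := by
    rw [← inner_conj_symm, hiuf]
    simp [map_div₀, Complex.conj_ofReal]
  have hiff : ⟪f, f⟫ = 1 := by
    rw [inner_self_eq_norm_sq_to_K, hf, norm_fourierV]; norm_num
  have happ : blockHam d 0 0 (u + f)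
      = -(⟪u, u + f⟫ • u + ⟪u, u + f⟫ • u + ⟪f, u + f⟫ • f + ⟪f, u + f⟫ • f) := by
    simp [blockHam, ContinuousLinearMap.add_apply, ContinuousLinearMap.neg_apply,
      rankOneProj_apply, hu, hf]
  rw [happ, inner_add_right, inner_add_right, hiuu, hiuf, hifu, hiff]
  have hc : ((-(2 * (1 + 1 / Real.sqrt d)) : ℝ) : ℂ)
      = -(2 * (1 + (1 / Real.sqrt d : ℂ))) := by push_cast; ring
  rw [hc]
  module

lemma one_add_s_ne (d : ℕ) [NeZero d] : (1 : ℂ) + (1 / Real.sqrt d : ℂ) ≠ 0 := by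
  have hpos : (0:ℝ) < 1 + 1 / Real.sqrt d := by positivity
  have : ((1 + 1 / Real.sqrt d : ℝ) : ℂ) ≠ 0 := by
    exact_mod_cast ne_of_gt hpos
  intro h
  apply this
  rw [← h]
  push_cast
  ring

lemma blockHam00_norm (d : ℕ) [NeZero d] :
    ‖blockHam d 0 0‖ = 2 * (1 + 1 / Real.sqrt d) := by
  refine le_antisymm (blockHam_le d 0 0) ?_
  have hx00 : (basisVec d 0 + fourierV d 0) 0 = (1 : ℂ) + (1 / Real.sqrt d : ℂ) := by
    have h1 : (basisVec d 0 + fourierV d 0) 0 = basisVec d 0 0 + fourierV d 0 0 := rfl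
    rw [h1, basisVec_apply, fourierV_zero_apply, if_pos rfl]
  have hx0 : basisVec d 0 + fourierV d 0 ≠ 0 := by
    intro h0
    apply one_add_s_ne d
    rw [← hx00, h0]
    rfl
  have hxn : ‖basisVec d 0 + fourierV d 0‖ ≠ 0 := norm_ne_zero_iff.2 hx0
  have hTx : ‖blockHam d 0 0 (basisVec d 0 + fourierV d 0)‖
      = (2 * (1 + 1 / Real.sqrt d)) * ‖basisVec d 0 + fourierV d 0‖ := by
    rw [blockHam_eigen d, norm_smul, Complex.norm_real, Real.norm_eq_abs,
      abs_neg, abs_of_pos (by positivity)]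
  have hrat := ContinuousLinearMap.ratio_le_opNorm (blockHam d 0 0)
    (basisVec d 0 + fourierV d 0)
  rw [hTx, mul_div_assoc, div_self hxn, mul_one] at hrat
  exact hrat

lemma blockHam_eq_imp (d : ℕ) [NeZero d] (h σ : ZMod d)
    (heq : ‖blockHam d h σ‖ = 2 * (1 + 1 / Real.sqrt d)) : h = 0 ∧ σ = 0 := by
  rcases eq_or_ne d 1 with rfl | hd1
  · exact ⟨Subsingleton.elim _ _, Subsingleton.elim _ _⟩
  have hd2 : 1 < d := by
    rcases Nat.lt_or_ge d 2 with hlt | hge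
    · interval_cases d
      · exact absurd rfl (NeZero.ne 0)
      · exact absurd rfl hd1
    · omega
  haveI : Fact (1 < d) := ⟨hd2⟩
  set t : ℝ := 1 / Real.sqrt d with htdef
  have ht : 0 < t := by rw [htdef]; positivity
  set s : ℂ := (1 / Real.sqrt d : ℂ) with hsdef
  have hcast : ((t : ℝ) : ℂ) = s := by rw [htdef, hsdef]; push_cast; ring
  have hs0 : s ≠ 0 := by
    rw [hsdef]
    simp only [ne_eq, div_eq_zero_iff, one_ne_zero, false_or, Complex.ofReal_eq_zero]
    exact ne_of_gt (sqrt_d_pos d)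
  set ω : ℂ := Complex.exp (2 * Real.pi * Complex.I / d) with hω
  set u0 := basisVec d 0 with hu0
  set f0 := fourierV d 0 with hf0
  set uh := basisVec d h with huh
  set fσ := fourierV d σ with hfσ
  haveI : Nontrivial (EuclideanSpace ℂ (ZMod d)) := by
    refine nontrivial_of_ne (basisVec d 0) 0 (fun h0 => ?_)
    have := norm_basisVec d 0
    rw [h0, norm_zero] at this
    norm_num at this
  obtain ⟨x, hx1, hxT⟩ := exists_norm_attained (blockHam d h σ)
  rw [heq] at hxT
  have happ : blockHam d h σ x
      = -((⟪u0, x⟫ • u0 + ⟪f0, x⟫ • f0) + (⟪uh, x⟫ • uh + ⟪fσ, x⟫ • fσ)) := by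
    rw [blockHam_regroup]
    simp [ContinuousLinearMap.add_apply, ContinuousLinearMap.neg_apply,
      rankOneProj_apply, hu0, hf0, huh, hfσ]
  have hsum : ‖(⟪u0, x⟫ • u0 + ⟪f0, x⟫ • f0) + (⟪uh, x⟫ • uh + ⟪fσ, x⟫ • fσ)‖
      = 2 * (1 + t) := by
    rw [← norm_neg, ← happ, hxT, htdef]
  have hBle : ‖⟪u0, x⟫ • u0 + ⟪f0, x⟫ • f0‖ ≤ 1 + t := by
    have := pair_apply_le u0 f0 x (norm_basisVec d 0) (norm_fourierV d 0)
      (le_of_eq (norm_inner_basis_fourier d 0 0))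
    rwa [hx1, mul_one] at this
  have hCle : ‖⟪uh, x⟫ • uh + ⟪fσ, x⟫ • fσ‖ ≤ 1 + t := by
    have := pair_apply_le uh fσ x (norm_basisVec d h) (norm_fourierV d σ)
      (le_of_eq (norm_inner_basis_fourier d h σ))
    rwa [hx1, mul_one] at this
  have htri := norm_add_le (⟪u0, x⟫ • u0 + ⟪f0, x⟫ • f0) (⟪uh, x⟫ • uh + ⟪fσ, x⟫ • fσ)
  have hBeq : ‖⟪u0, x⟫ • u0 + ⟪f0, x⟫ • f0‖ = 1 + t := by linarith
  have hCeq : ‖⟪uh, x⟫ • uh + ⟪fσ, x⟫ • fσ‖ = 1 + t := by linarith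
  -- rigidity for the (0,0) pair
  have hi00 : ⟪u0, f0⟫ = s := by
    rw [hu0, hf0, inner_basis_fourier, fourierV_zero_apply, hsdef]
  obtain ⟨ν, hν0, hxν⟩ := rigidity (norm_basisVec d 0) (norm_fourierV d 0) hx1 ht
    (norm_inner_basis_fourier d 0 0) hBeq
  rw [hi00, hcast, div_self hs0, one_smul] at hxν
  -- rigidity for the (h,σ) pair
  set W : ℂ := ω ^ (σ.val * h.val) with hW
  have hW1 : ‖W‖ = 1 := norm_omega_pow d _
  have hW0 : W ≠ 0 := omega_pow_ne_zero d _
  have hihσ : ⟪uh, fσ⟫ = s * W := by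
    rw [huh, hfσ, inner_basis_fourier, fourierV_apply, hsdef, hW, hω]
  obtain ⟨ν', hν'0, hxν'⟩ := rigidity (norm_basisVec d h) (norm_fourierV d σ) hx1 ht
    (norm_inner_basis_fourier d h σ) hCeq
  have hcoef : ((t : ℝ) : ℂ) / ⟪uh, fσ⟫ = W⁻¹ := by
    rw [hihσ, hcast]
    field_simp
  rw [hcoef] at hxν'
  have hEq : ν • (u0 + f0) = ν' • (uh + W⁻¹ • fσ) := hxν.symm.trans hxν'
  have hj : ∀ j : ZMod d, ν * (u0 j + f0 j) = ν' * (uh j + W⁻¹ * fσ j) := by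
    intro j
    have := congrArg (fun y : EuclideanSpace ℂ (ZMod d) => y j) hEq
    simpa [PiLp.add_apply, PiLp.smul_apply, smul_eq_mul, mul_add] using this
  have hnorm1s : ‖(1 : ℂ) + s‖ = 1 + t := by
    have : (1 : ℂ) + s = ((1 + t : ℝ) : ℂ) := by rw [← hcast]; push_cast; ring
    rw [this, Complex.norm_real, Real.norm_eq_abs, abs_of_pos (by linarith)]
  have hnorms : ‖s‖ = t := by
    rw [← hcast, Complex.norm_real, Real.norm_eq_abs, abs_of_pos ht]
  have hh0 : h = 0 := by
    by_contra hh
    have e0 := hj 0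
    rw [hu0, hf0, huh, hfσ, basisVec_apply, basisVec_apply, fourierV_zero_apply,
      fourierV_apply, if_pos rfl, if_neg (Ne.symm hh)] at e0
    simp only [ZMod.val_zero, Nat.mul_zero, pow_zero, mul_one, zero_add] at e0
    -- e0 : ν * (1 + s) = ν' * (W⁻¹ * s)   (with s abbreviation)
    have eh := hj h
    rw [hu0, hf0, huh, hfσ, basisVec_apply, basisVec_apply, fourierV_zero_apply,
      fourierV_apply, if_neg hh, if_pos rfl, zero_add] at eh
    -- eh : ν * s = ν' * (1 + W⁻¹ * (s * ω^(σ.val*h.val)))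
    have hWW : W⁻¹ * ((1 / Real.sqrt d : ℂ) * ω ^ (σ.val * h.val)) = s := by
      rw [hW, hsdef]
      field_simp
      exact (div_mul_cancel_left₀ hW0 _).trans (one_div _).symm
    rw [hWW] at eh
    have n0 : ‖ν‖ * (1 + t) = ‖ν'‖ * t := by
      have := congrArg norm e0
      rwa [norm_mul, norm_mul, norm_mul, norm_inv, hW1, inv_one, one_mul, hnorm1s,
        hnorms] at this
    have nh : ‖ν‖ * t = ‖ν'‖ * (1 + t) := by
      have := congrArg norm eh
      rwa [norm_mul, norm_mul, hnorms, hnorm1s] at this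
    have hν'pos : 0 < ‖ν'‖ := norm_pos_iff.2 hν'0
    have k1 : ‖ν‖ * t * (1 + t) = ‖ν'‖ * t * t := by linear_combination t * n0
    have k2 : ‖ν‖ * t * (1 + t) = ‖ν'‖ * (1 + 2 * t) + ‖ν'‖ * t * t := by
      linear_combination (1 + t) * nh
    have k3 : ‖ν'‖ * (1 + 2 * t) = 0 := by linarith
    have k4 : 0 < ‖ν'‖ * (1 + 2 * t) := mul_pos hν'pos (by linarith)
    linarith
  subst hh0
  refine ⟨rfl, ?_⟩
  have hWone : W = 1 := by
    rw [hW]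
    simp [ZMod.val_zero]
  rw [hWone, inv_one] at hj
  have hone0 : (1 : ZMod d) ≠ 0 := by
    intro hc
    have := congrArg ZMod.val hc
    rw [ZMod.val_one d, ZMod.val_zero] at this
    norm_num at this
  have e0 := hj 0
  rw [hu0, hf0, huh, hfσ, basisVec_apply, fourierV_zero_apply, fourierV_apply,
    if_pos rfl] at e0
  simp only [ZMod.val_zero, Nat.mul_zero, pow_zero, mul_one, one_mul] at e0
  -- e0 : ν * (1 + s) = ν' * (1 + s)
  have hνν' : ν = ν' := by
    have h1s : (1 : ℂ) + s ≠ 0 := by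
      intro hzero
      have := hnorm1s
      rw [hzero, norm_zero] at this
      linarith
    exact mul_right_cancel₀ h1s (by rw [hsdef]; exact e0)
  have e1 := hj 1
  rw [hu0, hf0, huh, hfσ, basisVec_apply, fourierV_zero_apply, fourierV_apply,
    if_neg hone0, ZMod.val_one d, Nat.mul_one, ← hνν'] at e1
  simp only [zero_add, one_mul] at e1
  -- e1 : ν * s = ν * (s * ω^(σ.val))
  have hpow : ω ^ σ.val = 1 := by
    have hνs : ν * (1 / Real.sqrt d : ℂ) ≠ 0 := by
      rw [← hsdef]; exact mul_ne_zero hν0 hs0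
    have key : ν * (1 / Real.sqrt d : ℂ) * 1 = ν * (1 / Real.sqrt d : ℂ) * ω ^ σ.val := by
      rw [hω, mul_one]
      linear_combination e1
    exact (mul_left_cancel₀ hνs key).symm
  have hprim : IsPrimitiveRoot ω d := by
    rw [hω]
    exact Complex.isPrimitiveRoot_exp d (NeZero.ne d)
  have hdvd : d ∣ σ.val := (hprim.pow_eq_one_iff_dvd σ.val).1 hpow
  have hlt : σ.val < d := ZMod.val_lt σ
  have hv0' : σ.val = 0 := Nat.eq_zero_of_dvd_of_lt hdvd hlt
  exact (ZMod.val_eq_zero σ).1 hv0'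

theorem blockHam_norm_bound (d : ℕ) [NeZero d] :
    (∀ h σ : ZMod d, ‖blockHam d h σ‖ ≤ 2 * (1 + 1 / Real.sqrt d)) ∧
    (∀ h σ : ZMod d,
      (‖blockHam d h σ‖ = 2 * (1 + 1 / Real.sqrt d) ↔ h = 0 ∧ σ = 0)) ∧
    blockHam d 0 0 (basisVec d 0 + fourierV d 0)
      = ((-(2 * (1 + 1 / Real.sqrt d)) : ℝ) : ℂ)
          • (basisVec d 0 + fourierV d 0) ∧
    (∀ μ : ℂ, Module.End.HasEigenvalue
        ((blockHam d 0 0 : EuclideanSpace ℂ (ZMod d) →ₗ[ℂ]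
          EuclideanSpace ℂ (ZMod d))) μ →
      -(2 * (1 + 1 / Real.sqrt d)) ≤ μ.re) := by
  refine ⟨fun h σ => blockHam_le d h σ, fun h σ => ⟨blockHam_eq_imp d h σ, ?_⟩,
    blockHam_eigen d, ?_⟩
  · rintro ⟨rfl, rfl⟩
    exact blockHam00_norm d
  · intro μ hμ
    obtain ⟨v, hv⟩ := hμ.exists_hasEigenvector
    have hveq : blockHam d 0 0 v = μ • v := hv.apply_eq_smul
    have hv0 : v ≠ 0 := hv.right
    have hvn : 0 < ‖v‖ := norm_pos_iff.2 hv0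
    have h1 : ‖μ‖ * ‖v‖ ≤ (2 * (1 + 1 / Real.sqrt d)) * ‖v‖ := by
      calc ‖μ‖ * ‖v‖ = ‖μ • v‖ := (norm_smul _ _).symm
        _ = ‖blockHam d 0 0 v‖ := by rw [hveq]
        _ ≤ ‖blockHam d 0 0‖ * ‖v‖ := (blockHam d 0 0).le_opNorm v
        _ ≤ (2 * (1 + 1 / Real.sqrt d)) * ‖v‖ :=
            mul_le_mul_of_nonneg_right (blockHam_le d 0 0) (norm_nonneg v)
    have h2 : ‖μ‖ ≤ 2 * (1 + 1 / Real.sqrt d) := le_of_mul_le_mul_right h1 hvn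
    have h3 : |μ.re| ≤ ‖μ‖ := by
      exact Complex.abs_re_le_norm μ
    have h4 := abs_le.1 h3
    linarith [h4.1]
end

section
/- Let G be a finite group, and on (ℂ[G])^{⊗4} define S_L^g = L_-^{g^{-1}} ⊗ L_-^{g^{-1}} ⊗ L_+^{g^{-1}} ⊗ L_+^{g^{-1}} and S_T^h = Σ_{g_1g_2g_3g_4 = h} T_-^{g_1} ⊗ T_+^{g_2} ⊗ T_+^{g_3} ⊗ T_-^{g_4}. Then S_L^g S_T^h = S_T^{g^{-1}hg} S_L^g for all g, h ∈ G (the quantum double algebra relation). -/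
open Matrix

variable {G : Type*}

/-- The stabilizer `S_L^g = L₋^{g⁻¹} ⊗ L₋^{g⁻¹} ⊗ L₊^{g⁻¹} ⊗ L₊^{g⁻¹}` on
`(ℂ[G])^{⊗4}`, where `L₊^g|k⟩ = |gk⟩` and `L₋^g|k⟩ = |kg⁻¹⟩`. -/
noncomputable def stabL [Group G] [DecidableEq G] (g : G) :
    Matrix (G × G × G × G) (G × G × G × G) ℂ :=
  fun a b =>
    if a.1 = b.1 * g ∧ a.2.1 = b.2.1 * g ∧ a.2.2.1 = g⁻¹ * b.2.2.1
        ∧ a.2.2.2 = g⁻¹ * b.2.2.2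
    then 1 else 0

/-- The stabilizer `S_T^h = Σ_{g₁g₂g₃g₄ = h} T₋^{g₁} ⊗ T₊^{g₂} ⊗ T₊^{g₃} ⊗ T₋^{g₄}`,
where `T₊^g = |g⟩⟨g|` and `T₋^g = |g⁻¹⟩⟨g⁻¹|`; it is diagonal with entry `1` at
`(k₁,k₂,k₃,k₄)` iff `k₁⁻¹ k₂ k₃ k₄⁻¹ = h`. -/
noncomputable def stabT [Group G] [DecidableEq G] (h : G) :
    Matrix (G × G × G × G) (G × G × G × G) ℂ :=
  Matrix.diagonal fun k =>
    if k.1⁻¹ * k.2.1 * k.2.2.1 * k.2.2.2⁻¹ = h then 1 else 0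

/-- The quantum double algebra relation `S_L^g S_T^h = S_T^{g⁻¹ h g} S_L^g`. -/
theorem quantum_double_algebra_relation [Group G] [Fintype G] [DecidableEq G]
    (g h : G) : stabL g * stabT h = stabT (g⁻¹ * h * g) * stabL g := by
  ext a b
  simp only [stabT]
  rw [Matrix.mul_diagonal, Matrix.diagonal_mul]
  rw [stabL]
  by_cases hc : a.1 = b.1 * g ∧ a.2.1 = b.2.1 * g ∧ a.2.2.1 = g⁻¹ * b.2.2.1
      ∧ a.2.2.2 = g⁻¹ * b.2.2.2
  · obtain ⟨h1, h2, h3, h4⟩ := hc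
    simp only [h1, h2, h3, h4, if_pos, and_self, if_true]
    have key : (b.1 * g)⁻¹ * (b.2.1 * g) * (g⁻¹ * b.2.2.1) * (g⁻¹ * b.2.2.2)⁻¹
        = g⁻¹ * (b.1⁻¹ * b.2.1 * b.2.2.1 * b.2.2.2⁻¹) * g := by group
    rw [one_mul, mul_one, key]
    simp only [mul_right_cancel_iff, mul_left_cancel_iff]
  · rw [if_neg hc]
    ring
end
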